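/- Let X be a connected and locally path-connected topological space, x ∈ X, let p : E → X be a covering map with E connected, and let e ∈ p⁻¹(x). Then there exists a normal subgroup N of π₁(X,x) such that N is open (h⁻¹(N) is open in Ω(X,x)) and N ⊆ p_#(π₁(E,e)). -/

import Mathlib

open unitInterval

/-- The homotopy class of a loop, as an element of the fundamental group. -/
noncomputable def pathClass {X : Type*} [TopologicalSpace X] {x : X} (γ : Path x x) :
    FundamentalGroup X x :=
  FundamentalGroup.fromPath (X := TopCat.of X) (Quotient.mk (Path.Homotopic.setoid x x) γ)

/-- The image `p_#(π₁(E,e))` of the homomorphism induced on fundamental groups by a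
continuous map `p : E → X` with `p e = x`, as a subset of `π₁(X,x)`. -/
noncomputable def inducedImage {E X : Type*} [TopologicalSpace E] [TopologicalSpace X]
    {p : E → X} (hp : Continuous p) (e : E) {x : X} (hx : p e = x) :
    Set (FundamentalGroup X x) :=
  {g | ∃ γ : Path e e, g = pathClass ((γ.map hp).cast hx.symm hx.symm)}

section Helpers

open CategoryTheory
attribute [local instance] Path.Homotopic.setoid

noncomputable section

variable {X : Type*} [TopologicalSpace X]

/-- Homotopy class of a path as a morphism in the fundamental groupoid. -/
def hq {a b : X} (γ : Path a b) :
    (FundamentalGroupoid.mk a) ⟶ (FundamentalGroupoid.mk b) := ⟦γ⟧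

theorem hq_comp {a b c : X} (γ : Path a b) (δ : Path b c) :
    hq γ ≫ hq δ = hq (γ.trans δ) :=
  (FundamentalGroupoid.comp_eq _ _ _ _ _).trans (Path.Homotopic.Quotient.mk_trans γ δ).symm

theorem hq_refl (a : X) : hq (Path.refl a) = 𝟙 (FundamentalGroupoid.mk a) := rfl

theorem hq_eq_of_homotopic {a b : X} {γ δ : Path a b} (h : γ.Homotopic δ) : hq γ = hq δ :=
  Quotient.sound h

theorem hq_comp_symm {a b : X} (γ : Path a b) : hq γ ≫ hq γ.symm = 𝟙 _ := by
  rw [hq_comp]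
  exact hq_eq_of_homotopic ⟨(Path.Homotopy.reflTransSymm γ).symm⟩

theorem hq_symm_eq_inv {a b : X} (γ : Path a b) : hq γ.symm = Groupoid.inv (hq γ) := by
  rw [Groupoid.inv_eq_inv]
  exact IsIso.eq_inv_of_hom_inv_id (hq_comp_symm γ)

/-- An element of the fundamental group as a morphism of the fundamental groupoid. -/
def _root_.FundamentalGroup.hom {x : X} (g : FundamentalGroup X x) :
    FundamentalGroupoid.mk x ⟶ FundamentalGroupoid.mk x := g

/-- An element of the fundamental group from a loop class. -/
def autOf {x : X} (q : FundamentalGroupoid.mk x ⟶ FundamentalGroupoid.mk x) :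
    FundamentalGroup X x :=
  q

@[simp] theorem autOf_hom {x : X} (q : FundamentalGroupoid.mk x ⟶ FundamentalGroupoid.mk x) :
    (autOf q).hom = q := rfl

theorem aut_ext {x : X} {g h : FundamentalGroup X x} (H : g.hom = h.hom) : g = h :=
  H

theorem hom_mul {x : X} (g h : FundamentalGroup X x) : (g * h).hom = h.hom ≫ g.hom := rfl

theorem hom_one {x : X} : (1 : FundamentalGroup X x).hom = 𝟙 _ := rfl

theorem hom_inv {x : X} (g : FundamentalGroup X x) : (g⁻¹).hom = Groupoid.inv g.hom := by
  rw [Groupoid.inv_eq_inv]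
  rw [← Groupoid.inv_eq_inv]; rfl

theorem pathClass_hom {x : X} (γ : Path x x) : (pathClass γ).hom = hq γ := rfl

theorem path_cast_self {a b : X} (γ : Path a b) (h1 : a = a) (h2 : b = b) :
    γ.cast h1 h2 = γ := rfl

/-- The affine subpath of `γ` from parameter `r` to parameter `s`. -/
def subpath {a b : X} (γ : Path a b) (r s : ℝ) : Path (γ.extend r) (γ.extend s) where
  toFun t := γ.extend (r + t * (s - r))
  continuous_toFun := by fun_prop
  source' := by simp
  target' := by simp

@[simp] theorem subpath_apply {a b : X} (γ : Path a b) (r s : ℝ) (t : I) :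
    subpath γ r s t = γ.extend (r + t * (s - r)) := rfl

/-- Two paths tracing `γ.extend` along parameter functions with equal endpoints are
homotopic, via the straight-line homotopy in the parameter. -/
theorem homotopic_of_extend_comp {a b c d : X} (γ : Path a b) (P Q : Path c d)
    {f g : I → ℝ} (hf : Continuous f) (hg : Continuous g)
    (hP : ∀ t, P t = γ.extend (f t)) (hQ : ∀ t, Q t = γ.extend (g t))
    (h0 : f 0 = g 0) (h1 : f 1 = g 1) : P.Homotopic Q := by
  refine ⟨⟨⟨fun p => γ.extend ((1 - (p.1 : ℝ)) * f p.2 + (p.1 : ℝ) * g p.2), ?_⟩, ?_, ?_⟩, ?_⟩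
  · fun_prop
  · intro t; simp [hP t]
  · intro t; simp [hQ t]
  · rintro u t ht
    simp only [Set.mem_insert_iff, Set.mem_singleton_iff] at ht
    rcases ht with rfl | rfl
    · simp only [ContinuousMap.coe_mk, Path.coe_toContinuousMap]
      rw [h0, hP 0, h0]
      ring_nf
    · simp only [ContinuousMap.coe_mk, Path.coe_toContinuousMap]
      rw [h1, hP 1, h1]
      ring_nf

/-- Two pointwise-constant paths (with value `γ.extend r`) have the same class. -/
theorem hq_constEq {a b c d : X} (γ : Path a b) (r : ℝ) (P Q : Path c d)
    (hP : ∀ t, P t = γ.extend r) (hQ : ∀ t, Q t = γ.extend r) : hq P = hq Q :=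
  hq_eq_of_homotopic (homotopic_of_extend_comp γ P Q continuous_const continuous_const
    hP hQ rfl rfl)

/-- Subdivision: composing two consecutive subpaths gives the longer subpath. -/
theorem hq_subdiv {a b x' : X} (γ : Path a b) (r s u : ℝ) (hx : x' = γ.extend r) :
    hq ((subpath γ r s).cast hx rfl) ≫ hq (subpath γ s u) =
      hq ((subpath γ r u).cast hx rfl) := by
  rw [hq_comp]
  apply hq_eq_of_homotopic
  apply homotopic_of_extend_comp γ _ _
    (f := fun t => if (t:ℝ) ≤ 1/2 then r + (2*(t:ℝ))*(s-r) else s + (2*(t:ℝ)-1)*(u-s))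
    (g := fun t => r + (t:ℝ)*(u-r))
  · apply continuous_if_le (by fun_prop) (by fun_prop) (by fun_prop) (by fun_prop)
    intro t ht
    rw [ht]; ring
  · fun_prop
  · intro t
    rw [Path.trans_apply]
    split_ifs with h
    · simp only [Path.cast_coe, subpath_apply]
    · simp only [subpath_apply]
  · intro t
    simp only [Path.cast_coe, subpath_apply]
  all_goals norm_num

/-- The subpath from `0` to `r ≥ 1` composed with a constant connector is the whole path. -/
theorem hq_whole {x : X} (γ : Path x x) (r : ℝ) (hr : 1 ≤ r)
    (h0 : x = γ.extend 0) (h1 : x = γ.extend r) :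
    hq ((subpath γ 0 r).cast h0 rfl) ≫ hq ((Path.refl x).cast h1.symm rfl) = hq γ := by
  rw [hq_comp]
  apply hq_eq_of_homotopic
  apply homotopic_of_extend_comp γ _ _
    (f := fun t => min (2*(t:ℝ)*r) 1) (g := fun t => (t:ℝ))
  · fun_prop
  · fun_prop
  · intro t
    rw [Path.trans_apply]
    split_ifs with h
    · simp only [Path.cast_coe, subpath_apply]
      rcases le_or_gt (2*(t:ℝ)*r) 1 with h2 | h2
      · rw [min_eq_left h2]; ring_nf
      · rw [min_eq_right h2.le, γ.extend_of_one_le (by linarith), γ.extend_of_one_le le_rfl]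
    · simp only [Path.cast_coe, Path.refl_apply]
      have h2 : (1:ℝ) ≤ 2*(t:ℝ)*r := by nlinarith [t.2.2]
      rw [min_eq_right h2]
      exact γ.extend_one.symm
  · intro t
    exact (γ.extend_extends' t).symm
  · norm_num
  · simp only [Set.Icc.coe_one]
    rw [min_eq_right (by linarith)]

end

end Helpers

section Lifting

open Set

noncomputable section
variable {X E : Type*} [TopologicalSpace X] [TopologicalSpace E] {p : E → X}

theorem sheet_eq {F : Type*} [TopologicalSpace F] (t : Bundle.Trivialization F p) {e' : E}
    (he' : p e' ∈ t.baseSet) :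
    t.toOpenPartialHomeomorph.symm (p e', (t e').2) = e' := by
  have h1 : (p e', (t e').2) = t e' := t.mk_proj_snd' he'
  rw [h1]
  exact t.toOpenPartialHomeomorph.left_inv (t.mem_source.2 he')

/-- A loop inside the base set of a trivialization lifts to a loop. -/
theorem loop_sheet_lift {F : Type*} [TopologicalSpace F] (t : Bundle.Trivialization F p)
    (e₁ : E) (ℓ : Path (p e₁) (p e₁)) (hr : ∀ s, ℓ s ∈ t.baseSet) :
    ∃ Λ : Path e₁ e₁, ∀ s : I, p (Λ s) = ℓ s := by
  have hb : p e₁ ∈ t.baseSet := by have := hr 0; rwa [ℓ.source] at this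
  refine ⟨⟨⟨fun s => t.toOpenPartialHomeomorph.symm (ℓ s, (t e₁).2), ?_⟩, ?_, ?_⟩, ?_⟩
  · apply t.toOpenPartialHomeomorph.continuousOn_symm.comp_continuous (by fun_prop)
    intro s
    rw [t.mem_target]
    exact hr s
  · show t.toOpenPartialHomeomorph.symm (ℓ 0, (t e₁).2) = e₁
    rw [ℓ.source]
    exact sheet_eq t hb
  · show t.toOpenPartialHomeomorph.symm (ℓ 1, (t e₁).2) = e₁
    rw [ℓ.target]
    exact sheet_eq t hb
  · intro s
    exact t.proj_symm_apply (t.mem_target.2 (hr s))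

/-- Path lifting for covering maps (pointwise exact lift). -/
theorem IsCoveringMap.exists_path_lift (hcov : IsCoveringMap p) {a b : X}
    (pa : Path a b) (e' : E) (he' : p e' = a) :
    ∃ (e'' : E) (Γ : Path e' e''), ∀ s : I, p (Γ s) = pa s := by
  obtain ⟨Γ, hΓ, hΓ0⟩ := hcov.exists_path_lifts pa.toContinuousMap e' (by simp [he'])
  exact ⟨Γ 1, ⟨Γ, hΓ0, rfl⟩, fun s => congrFun hΓ s⟩

end

end Lifting

open CategoryTheory in
/-- If `X` is connected and locally path-connected and `p : E → X` is a covering map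
(a continuous surjection with evenly covered neighborhoods) with `E` connected and
`p e = x`, then there is an open normal subgroup `N` of `π₁(X,x)` contained in
`p_#(π₁(E,e))`. -/
theorem exists_open_normal_subgroup_le_inducedImage_of_coveringMap
    {X E : Type*} [TopologicalSpace X] [TopologicalSpace E]
    [ConnectedSpace X] [LocallyPathConnectedSpace X] [ConnectedSpace E]
    {p : E → X} (hcov : IsCoveringMap p) (hsurj : Function.Surjective p)
    (x : X) (e : E) (he : p e = x) :
    ∃ N : Subgroup (FundamentalGroup X x), N.Normal ∧
      IsOpen {γ : Path x x | pathClass γ ∈ N} ∧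
      (N : Set (FundamentalGroup X x)) ⊆ inducedImage hcov.continuous e he := by
  classical
  haveI : ∀ y : X, Nonempty (p ⁻¹' {y}) := fun y => ⟨⟨(hsurj y).choose, (hsurj y).choose_spec⟩⟩
  subst he
  set S : Set (FundamentalGroup X (p e)) :=
    {g | ∃ (y : X) (a : FundamentalGroupoid.mk (p e) ⟶ FundamentalGroupoid.mk y)
        (ℓ : Path y y) (U : Set X),
        (∃ (z : X) (t : Bundle.Trivialization (p ⁻¹' {z} : Set E) p), U ⊆ t.baseSet) ∧
        (∀ s : I, ℓ s ∈ U) ∧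
        g.hom = a ≫ hq ℓ ≫ CategoryTheory.Groupoid.inv a} with hSdef
  have hconj : ∀ c : FundamentalGroup X (p e), ∀ h ∈ S, c * h * c⁻¹ ∈ S := by
    rintro c h ⟨y, a, ℓ, U, hU, hr, hh⟩
    refine ⟨y, CategoryTheory.Groupoid.inv c.hom ≫ a, ℓ, U, hU, hr, ?_⟩
    rw [hom_mul, hom_mul, hom_inv, hh]
    simp [CategoryTheory.Groupoid.inv_eq_inv, CategoryTheory.Category.assoc]
  refine ⟨Subgroup.closure S, ?_, ?_, ?_⟩
  · -- normality
    constructor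
    intro n hn g
    refine Subgroup.closure_induction
      (p := fun h _ => g * h * g⁻¹ ∈ Subgroup.closure S) ?_ ?_ ?_ ?_ hn
    · exact fun h hh => Subgroup.subset_closure (hconj g h hh)
    · simp only [mul_one, mul_inv_cancel]; exact Subgroup.one_mem _
    · intro a b _ _ hga hgb
      have hab : g*(a*b)*g⁻¹ = (g*a*g⁻¹)*(g*b*g⁻¹) := by group
      rw [hab]; exact mul_mem hga hgb
    · intro a _ hga
      have hab : g*a⁻¹*g⁻¹ = (g*a*g⁻¹)⁻¹ := by group
      rw [hab]; exact inv_mem hga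
  · -- openness
    rw [isOpen_iff_forall_mem_open]
    intro γ₀ hγ₀
    simp only [Set.mem_setOf_eq] at hγ₀
    obtain ⟨δ, δpos, hδ⟩ :=
      lebesgue_number_lemma_of_metric (s := (Set.univ : Set I))
        (c := fun s : I => ⇑γ₀ ⁻¹' (hcov (γ₀ s)).toTrivialization.baseSet)
        isCompact_univ
        (fun s => (hcov (γ₀ s)).toTrivialization.open_baseSet.preimage γ₀.continuous)
        (fun s _ => Set.mem_iUnion.2 ⟨s, (hcov (γ₀ s)).mem_toTrivialization_baseSet⟩)
    obtain ⟨m, hm0, hmδ⟩ : ∃ m : ℕ, 0 < m ∧ 1/(m:ℝ) < δ := by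
      obtain ⟨n, hn⟩ := exists_nat_one_div_lt δpos
      exact ⟨n+1, Nat.succ_pos n, by exact_mod_cast hn⟩
    have hmpos : (0:ℝ) < m := by exact_mod_cast hm0
    -- choose the chain of evenly covered open sets along γ₀
    have hUex : ∀ k : ℕ, ∃ U : Set X,
        (∃ (z : X) (t : Bundle.Trivialization (p ⁻¹' {z} : Set E) p), U ⊆ t.baseSet) ∧ IsOpen U ∧
        (k < m → ∀ r ∈ Set.Icc ((k:ℝ)/m) (((k+1:ℕ):ℝ)/m), γ₀.extend r ∈ U) := by
      intro k
      by_cases hk : k < m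
      · have hkI : ((k:ℝ)/m) ∈ I := ⟨by positivity,
          by rw [div_le_one hmpos]; exact_mod_cast hk.le⟩
        obtain ⟨s₀, hs₀⟩ := hδ ⟨_, hkI⟩ (Set.mem_univ _)
        refine ⟨(hcov (γ₀ s₀)).toTrivialization.baseSet, ⟨_, _, subset_rfl⟩,
          (hcov _).toTrivialization.open_baseSet, fun _ r hr => ?_⟩
        have hkm1 : ((k+1:ℕ):ℝ)/m ≤ 1 := by
          rw [div_le_one hmpos]; exact_mod_cast hk
        have h1m : ((k+1:ℕ):ℝ)/m - (k:ℝ)/m = 1/m := by push_cast; ring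
        have hrI : r ∈ I := ⟨le_trans (by positivity) hr.1, le_trans hr.2 hkm1⟩
        have hball : (⟨r, hrI⟩ : I) ∈ Metric.ball (⟨(k:ℝ)/m, hkI⟩ : I) δ := by
          rw [Metric.mem_ball, Subtype.dist_eq, Real.dist_eq, abs_sub_lt_iff]
          constructor <;> [linarith [hr.1, hr.2]; linarith [hr.1]]
        have hmem := hs₀ hball
        rw [Set.mem_preimage] at hmem
        rwa [γ₀.extend_apply hrI]
      · exact ⟨(hcov (γ₀ 0)).toTrivialization.baseSet, ⟨_, _, subset_rfl⟩,
          (hcov _).toTrivialization.open_baseSet, fun h => absurd h hk⟩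
    choose U hUev hUopen hUin using hUex
    -- path components at the junction points
    set V : ℕ → Set X := fun k =>
      pathComponentIn (U (k-1) ∩ U k) (γ₀.extend ((k:ℝ)/m)) with hVdef
    set O : Set (Path (p e) (p e)) :=
      {γ | (∀ k, k < m → Set.MapsTo ⇑γ
          {s : I | (s:ℝ) ∈ Set.Icc ((k:ℝ)/m) (((k+1:ℕ):ℝ)/m)} (U k)) ∧
        (∀ k, 0 < k → k < m → γ.extend ((k:ℝ)/m) ∈ V k)} with hOdef
    refine ⟨O, ?_, ?_, ?_⟩
    · -- O is contained in the N-set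
      intro γ hγO
      simp only [hOdef, Set.mem_setOf_eq] at hγO
      obtain ⟨hγ1, hγ2⟩ := hγO
      show pathClass γ ∈ Subgroup.closure S
      have hA0 : (p e) = γ₀.extend 0 := γ₀.extend_zero.symm
      have hC0 : (p e) = γ.extend 0 := γ.extend_zero.symm
      have hpe0 : p e ∈ U 0 := by
        have h1 := hUin 0 hm0 (((0:ℕ):ℝ)/m) ⟨le_rfl, by gcongr <;> norm_num⟩
        rw [show ((0:ℕ):ℝ)/m = 0 by norm_num, γ₀.extend_zero] at h1
        exact h1
      have hpem : p e ∈ U (m-1) := by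
        have h1 := hUin (m-1) (Nat.sub_lt hm0 one_pos) 1
          ⟨by rw [div_le_one hmpos]; exact_mod_cast Nat.sub_le m 1,
           by rw [show m - 1 + 1 = m from Nat.succ_pred_eq_of_pos hm0,
             div_self (ne_of_gt hmpos)]⟩
        rwa [γ₀.extend_one] at h1
      -- choice of junction paths
      have hexB : ∀ k : ℕ, ∃ B : Path (γ₀.extend ((k:ℝ)/m)) (γ.extend ((k:ℝ)/m)),
          (0 < k → k < m → ∀ s : I, B s ∈ U (k-1) ∩ U k) ∧
          (¬(0 < k ∧ k < m) → ∀ s : I, B s = p e) := by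
        intro k
        by_cases hk : 0 < k ∧ k < m
        · have hJ : JoinedIn (U (k-1) ∩ U k) (γ₀.extend ((k:ℝ)/m)) (γ.extend ((k:ℝ)/m)) :=
            hγ2 k hk.1 hk.2
          exact ⟨hJ.somePath, fun _ _ s => hJ.somePath_mem s, fun h => absurd hk h⟩
        · have hkcase : k = 0 ∨ m ≤ k := by omega
          have hwk : γ₀.extend ((k:ℝ)/m) = p e := by
            rcases hkcase with rfl | hmk
            · rw [show ((0:ℕ):ℝ)/m = 0 by norm_num, γ₀.extend_zero]
            · rw [γ₀.extend_of_one_le ((one_le_div hmpos).mpr (by exact_mod_cast hmk))]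
          have hvk : γ.extend ((k:ℝ)/m) = p e := by
            rcases hkcase with rfl | hmk
            · rw [show ((0:ℕ):ℝ)/m = 0 by norm_num, γ.extend_zero]
            · rw [γ.extend_of_one_le ((one_le_div hmpos).mpr (by exact_mod_cast hmk))]
          exact ⟨(Path.refl (p e)).cast hwk hvk, fun h1 h2 => absurd ⟨h1, h2⟩ hk,
            fun _ s => rfl⟩
      choose B hBV hBconst using hexB
      -- small subpaths stay in the corresponding chain set
      have hsubmem : ∀ (η : Path (p e) (p e)) (k : ℕ), k < m →
          Set.MapsTo ⇑η {s : I | (s:ℝ) ∈ Set.Icc ((k:ℝ)/m) (((k+1:ℕ):ℝ)/m)} (U k) →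
          ∀ s : I, (subpath η ((k:ℝ)/m) (((k+1:ℕ):ℝ)/m)) s ∈ U k := by
        intro η k hk hmap s
        rw [subpath_apply]
        have h1m : ((k+1:ℕ):ℝ)/m - (k:ℝ)/m = 1/m := by push_cast; ring
        have hs0 : (0:ℝ) ≤ s := s.2.1
        have hs1 : (s:ℝ) ≤ 1 := s.2.2
        have h1mpos : (0:ℝ) < 1/m := by positivity
        have hr1 : (k:ℝ)/m ≤ (k:ℝ)/m + s * (((k+1:ℕ):ℝ)/m - (k:ℝ)/m) := by
          rw [h1m]; nlinarith
        have hr2 : (k:ℝ)/m + s * (((k+1:ℕ):ℝ)/m - (k:ℝ)/m) ≤ ((k+1:ℕ):ℝ)/m := by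
          rw [h1m]
          have : ((k+1:ℕ):ℝ)/m = (k:ℝ)/m + 1/m := by rw [← h1m]; ring
          rw [this]; nlinarith
        have hrI : (k:ℝ)/m + s * (((k+1:ℕ):ℝ)/m - (k:ℝ)/m) ∈ I :=
          ⟨le_trans (by positivity) hr1,
           le_trans hr2 (by rw [div_le_one hmpos]; exact_mod_cast hk)⟩
        rw [η.extend_apply hrI]
        exact hmap ⟨hr1, hr2⟩
      have hγ₀map : ∀ k, k < m → Set.MapsTo ⇑γ₀
          {s : I | (s:ℝ) ∈ Set.Icc ((k:ℝ)/m) (((k+1:ℕ):ℝ)/m)} (U k) := by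
        intro k hk s hs
        have h1 := hUin k hk ↑s hs
        rwa [γ₀.extend_extends' s] at h1
      -- the small loops stay in their chain set
      have hloopmem : ∀ k, k < m → ∀ s : I,
          ((B k).trans ((subpath γ ((k:ℝ)/m) (((k+1:ℕ):ℝ)/m)).trans
            (((subpath γ₀ ((k:ℝ)/m) (((k+1:ℕ):ℝ)/m)).trans (B (k+1))).symm))) s ∈ U k := by
        intro k hk
        have h1 : ∀ s : I, B k s ∈ U k := by
          by_cases h0 : 0 < k
          · exact fun s => (hBV k h0 hk s).2
          · have hk0 : k = 0 := by omega
            subst hk0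
            intro s
            rw [hBconst 0 (by omega) s]
            exact hpe0
        have h4 : ∀ s : I, B (k+1) s ∈ U k := by
          by_cases hk1 : k+1 < m
          · intro s
            have h5 := (hBV (k+1) (Nat.succ_pos k) hk1 s).1
            simpa using h5
          · intro s
            rw [hBconst (k+1) (by omega) s]
            have hk1m : k = m-1 := by omega
            rw [hk1m]; exact hpem
        intro s
        have hrsub : Set.range ((B k).trans ((subpath γ ((k:ℝ)/m) (((k+1:ℕ):ℝ)/m)).trans
            (((subpath γ₀ ((k:ℝ)/m) (((k+1:ℕ):ℝ)/m)).trans (B (k+1))).symm))) ⊆ U k := by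
          rw [Path.trans_range, Path.trans_range, Path.symm_range, Path.trans_range]
          refine Set.union_subset (Set.range_subset_iff.2 h1)
            (Set.union_subset (Set.range_subset_iff.2 (hsubmem γ k hk (hγ1 k hk)))
              (Set.union_subset (Set.range_subset_iff.2 (hsubmem γ₀ k hk (hγ₀map k hk)))
                (Set.range_subset_iff.2 h4)))
        exact hrsub (Set.mem_range_self s)
      -- telescoping construction
      have tele : ∀ k : ℕ, k ≤ m → ∃ P : FundamentalGroup X (p e),
          P ∈ Subgroup.closure S ∧
          P.hom = hq ((subpath γ 0 ((k:ℝ)/m)).cast hC0 rfl) ≫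
            Groupoid.inv (hq (B k)) ≫
            Groupoid.inv (hq ((subpath γ₀ 0 ((k:ℝ)/m)).cast hA0 rfl)) := by
        intro k hkm
        induction k with
        | zero =>
          refine ⟨1, Subgroup.one_mem _, ?_⟩
          rw [hom_one]
          have hw0 : γ₀.extend (((0:ℕ):ℝ)/m) = p e := by
            rw [show ((0:ℕ):ℝ)/m = 0 by norm_num, γ₀.extend_zero]
          have hv0 : γ.extend (((0:ℕ):ℝ)/m) = p e := by
            rw [show ((0:ℕ):ℝ)/m = 0 by norm_num, γ.extend_zero]
          have f1 : hq ((subpath γ₀ 0 (((0:ℕ):ℝ)/m)).cast hA0 rfl) ≫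
              hq ((Path.refl (p e)).cast hw0 rfl) = 𝟙 _ := by
            rw [hq_comp, ← hq_refl (p e)]
            apply hq_constEq γ₀ 0
            · intro t
              rw [Path.trans_apply]
              split_ifs with h
              · simp [Path.cast_coe]
              · exact γ₀.extend_zero.symm
            · intro t
              exact γ₀.extend_zero.symm
          have f2 : hq ((subpath γ 0 (((0:ℕ):ℝ)/m)).cast hC0 rfl) ≫
              hq ((Path.refl (p e)).cast hv0 rfl) = 𝟙 _ := by
            rw [hq_comp, ← hq_refl (p e)]
            apply hq_constEq γ₀ 0
            · intro t
              rw [Path.trans_apply]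
              split_ifs with h
              · simp only [Path.cast_coe, subpath_apply, Nat.cast_zero, zero_div,
                  sub_zero, mul_zero, add_zero, γ.extend_zero]
                exact γ₀.extend_zero.symm
              · exact γ₀.extend_zero.symm
            · intro t
              exact γ₀.extend_zero.symm
          have f3 : hq (B 0) = hq (((Path.refl (p e)).cast hw0 rfl).trans
              ((Path.refl (p e)).cast hv0 rfl).symm) := by
            apply hq_constEq γ₀ 0
            · intro t
              rw [hBconst 0 (by omega) t]
              exact γ₀.extend_zero.symm
            · intro t
              rw [Path.trans_apply]
              split_ifs with h
              · exact γ₀.extend_zero.symm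
              · exact γ₀.extend_zero.symm
          symm
          rw [f3, ← hq_comp, hq_symm_eq_inv]
          simp only [Groupoid.inv_eq_inv, IsIso.inv_comp, IsIso.inv_inv, Category.assoc]
          rw [IsIso.inv_eq_of_hom_inv_id f1, IsIso.inv_eq_of_inv_hom_id f1, f1,
            Category.comp_id, f2]
        | succ k ih =>
          have hkm' : k < m := hkm
          obtain ⟨P, hPN, hPhom⟩ := ih (Nat.le_of_succ_le hkm)
          have hgen : autOf (hq ((subpath γ₀ 0 ((k:ℝ)/m)).cast hA0 rfl) ≫
              hq ((B k).trans ((subpath γ ((k:ℝ)/m) (((k+1:ℕ):ℝ)/m)).trans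
                (((subpath γ₀ ((k:ℝ)/m) (((k+1:ℕ):ℝ)/m)).trans (B (k+1))).symm))) ≫
              Groupoid.inv (hq ((subpath γ₀ 0 ((k:ℝ)/m)).cast hA0 rfl))) ∈ S :=
            ⟨γ₀.extend ((k:ℝ)/m), _, _, U k, hUev k, hloopmem k hkm', rfl⟩
          refine ⟨autOf (hq ((subpath γ₀ 0 ((k:ℝ)/m)).cast hA0 rfl) ≫
              hq ((B k).trans ((subpath γ ((k:ℝ)/m) (((k+1:ℕ):ℝ)/m)).trans
                (((subpath γ₀ ((k:ℝ)/m) (((k+1:ℕ):ℝ)/m)).trans (B (k+1))).symm))) ≫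
              Groupoid.inv (hq ((subpath γ₀ 0 ((k:ℝ)/m)).cast hA0 rfl))) * P,
            mul_mem (Subgroup.subset_closure hgen) hPN, ?_⟩
          rw [hom_mul, hPhom, autOf_hom]
          rw [← hq_subdiv γ 0 ((k:ℝ)/m) (((k+1:ℕ):ℝ)/m) hC0]
          rw [← hq_subdiv γ₀ 0 ((k:ℝ)/m) (((k+1:ℕ):ℝ)/m) hA0]
          simp only [← hq_comp, hq_symm_eq_inv]
          simp only [Groupoid.inv_eq_inv, IsIso.inv_comp, IsIso.inv_inv, Category.assoc,
            IsIso.inv_hom_id_assoc, IsIso.hom_inv_id_assoc, Category.comp_id,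
            Category.id_comp]
      -- conclusion
      obtain ⟨P, hPN, hPhom⟩ := tele m le_rfl
      have hmm1 : ((m:ℕ):ℝ)/m = 1 := div_self (ne_of_gt hmpos)
      have hwm : p e = γ₀.extend ((m:ℝ)/m) := by rw [hmm1, γ₀.extend_one]
      have hvm : p e = γ.extend ((m:ℝ)/m) := by rw [hmm1, γ.extend_one]
      have f1 := hq_whole γ₀ ((m:ℝ)/m) (le_of_eq hmm1.symm) hA0 hwm
      have f2 := hq_whole γ ((m:ℝ)/m) (le_of_eq hmm1.symm) hC0 hvm
      have f3 : hq (B m) = hq (((Path.refl (p e)).cast hwm.symm rfl).trans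
          ((Path.refl (p e)).cast hvm.symm rfl).symm) := by
        apply hq_constEq γ₀ 1
        · intro t
          rw [hBconst m (by omega) t]
          exact γ₀.extend_one.symm
        · intro t
          rw [Path.trans_apply]
          split_ifs with h
          · exact γ₀.extend_one.symm
          · exact γ₀.extend_one.symm
      have hfinal : pathClass γ = pathClass γ₀ * P := by
        apply aut_ext
        rw [hom_mul, hPhom, pathClass_hom, pathClass_hom, f3, ← f1, ← f2]
        simp only [← hq_comp, hq_symm_eq_inv]
        simp only [Groupoid.inv_eq_inv, IsIso.inv_comp, IsIso.inv_inv, Category.assoc,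
          IsIso.inv_hom_id_assoc, IsIso.hom_inv_id_assoc, IsIso.inv_hom_id,
          IsIso.hom_inv_id, Category.comp_id, Category.id_comp]
      rw [hfinal]
      exact mul_mem hγ₀ hPN
    · -- O is open
      have hO : O = (⋂ k ∈ Finset.range m, {γ : Path (p e) (p e) | Set.MapsTo ⇑γ
            {s : I | (s:ℝ) ∈ Set.Icc ((k:ℝ)/m) (((k+1:ℕ):ℝ)/m)} (U k)}) ∩
          (⋂ k ∈ Finset.Ioo 0 m, {γ : Path (p e) (p e) | γ.extend ((k:ℝ)/m) ∈ V k}) := by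
        ext γ
        simp only [hOdef, Set.mem_setOf_eq, Set.mem_inter_iff, Set.mem_iInter,
          Finset.mem_range, Finset.mem_Ioo]
        constructor
        · rintro ⟨h1, h2⟩
          exact ⟨fun k hk => h1 k hk, fun k hk => h2 k hk.1 hk.2⟩
        · rintro ⟨h1, h2⟩
          exact ⟨fun k hk => h1 k hk, fun k hk1 hk2 => h2 k ⟨hk1, hk2⟩⟩
      rw [hO]
      apply IsOpen.inter
      · apply isOpen_biInter_finset
        intro k _
        have hKcpt : IsCompact {s : I | (s:ℝ) ∈ Set.Icc ((k:ℝ)/m) (((k+1:ℕ):ℝ)/m)} :=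
          (isClosed_Icc.preimage continuous_subtype_val).isCompact
        exact IsOpen.preimage continuous_induced_dom
          (ContinuousMap.isOpen_setOf_mapsTo hKcpt (hUopen k))
      · apply isOpen_biInter_finset
        intro k _
        exact IsOpen.preimage (continuous_eval_const _)
          (IsOpen.pathComponentIn ((hUopen (k-1)).inter (hUopen k)) _)
    · -- γ₀ ∈ O
      refine ⟨?_, ?_⟩
      · intro k hk s hs
        have h1 := hUin k hk ↑s hs
        rwa [γ₀.extend_extends' s] at h1
      · intro k h0 hk
        apply mem_pathComponentIn_self
        constructor
        · have hku : (k-1)+1 = k := Nat.succ_pred_eq_of_pos h0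
          apply hUin (k-1) (lt_of_le_of_lt (Nat.sub_le k 1) hk)
          constructor
          · gcongr
            exact_mod_cast Nat.sub_le k 1
          · rw [hku]
        · refine hUin k hk _ ⟨le_rfl, ?_⟩
          gcongr
          exact_mod_cast Nat.le_succ k
  · -- contained in the image subgroup
    intro g hg
    rw [SetLike.mem_coe] at hg
    refine Subgroup.closure_induction
      (p := fun h _ => h ∈ inducedImage hcov.continuous e rfl) ?_ ?_ ?_ ?_ hg
    · -- generators lift
      rintro g ⟨y, a, ℓ, U, ⟨z, t, hUb⟩, hr, hghom⟩
      obtain ⟨α, hα⟩ := Quotient.exists_rep a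
      obtain ⟨e₁, Γ, hΓ⟩ := hcov.exists_path_lift α e rfl
      have hpe₁ : p e₁ = y := by
        have h1 := hΓ 1
        rwa [Γ.target, α.target] at h1
      subst hpe₁
      obtain ⟨Λ, hΛ⟩ := loop_sheet_lift t e₁ ℓ (fun s => hUb (hr s))
      refine ⟨(Γ.trans Λ).trans Γ.symm, ?_⟩
      have hMΓ : Γ.map hcov.continuous = α := Path.ext (by rw [Path.map_coe]; exact funext hΓ)
      have hMΛ : Λ.map hcov.continuous = ℓ := Path.ext (by rw [Path.map_coe]; exact funext hΛ)
      apply aut_ext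
      rw [hghom, pathClass_hom, path_cast_self, Path.map_trans, Path.map_trans,
        ← Path.map_symm, hMΓ, hMΛ, ← hq_comp, ← hq_comp, hq_symm_eq_inv]
      rw [show a = hq α from hα.symm]
      rw [Category.assoc]
    · exact ⟨Path.refl e, by
        apply aut_ext
        rw [pathClass_hom, path_cast_self, hom_one]
        rfl⟩
    · rintro g₁ g₂ _ _ ⟨γ₁, h₁⟩ ⟨γ₂, h₂⟩
      refine ⟨γ₂.trans γ₁, ?_⟩
      apply aut_ext
      rw [h₁, h₂, hom_mul, pathClass_hom, pathClass_hom, pathClass_hom,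
        path_cast_self, path_cast_self, path_cast_self, Path.map_trans, ← hq_comp]
    · rintro g₁ _ ⟨γ₁, h₁⟩
      refine ⟨γ₁.symm, ?_⟩
      apply aut_ext
      rw [h₁, hom_inv, pathClass_hom, pathClass_hom, path_cast_self, path_cast_self,
        ← Path.map_symm, hq_symm_eq_inv]
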